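/- For every integer n ≥ 1, (1/n)·[t^{n−1}] (1−4t)/(1−t)^{3n+4} = (2/(n(n+1)))·C(4n+1, n−1), where [t^{n−1}] denotes coefficient extraction from the formal power series expansion. -/

import Mathlib

open PowerSeries

lemma chapoton_inv_eq (d : ℕ) :
    ((1 - X : ℚ⟦X⟧)^(d+1))⁻¹ = PowerSeries.mk fun m => ((d + m).choose d : ℚ) := by
  rw [eq_comm, PowerSeries.eq_inv_iff_mul_eq_one]
  · exact PowerSeries.mk_add_choose_mul_one_sub_pow_eq_one ℚ d
  · simp

lemma chapoton_choose (k : ℕ) :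
    ((4*k+9).choose (k+1) : ℚ) * (k+1) = ((4*k+9).choose k) * (3*k+9) := by
  have := Nat.choose_succ_right_eq (4*k+9) k
  have h9 : 4*k+9 - k = 3*k+9 := by omega
  rw [h9] at this
  exact_mod_cast congrArg (Nat.cast : ℕ → ℚ) this

theorem chapoton_coeff (n : ℕ) (hn : 1 ≤ n) :
    (1/(n : ℚ)) * PowerSeries.coeff (R := ℚ) (n-1)
        ((1 - 4*PowerSeries.X) * ((1 - PowerSeries.X)^(3*n+4))⁻¹)
      = 2/((n : ℚ)*((n : ℚ)+1)) * (Nat.choose (4*n+1) (n-1) : ℚ) := by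
  obtain ⟨m, rfl⟩ : ∃ m, n = m + 1 := ⟨n - 1, by omega⟩
  have hd : 3*(m+1)+4 = (3*m+6)+1 := by ring
  rw [hd, chapoton_inv_eq]
  have hsub : m + 1 - 1 = m := rfl
  rw [hsub]
  have hexp : ((1 - 4*X : ℚ⟦X⟧) * PowerSeries.mk fun j => ((3*m+6 + j).choose (3*m+6) : ℚ))
      = (PowerSeries.mk fun j => ((3*m+6 + j).choose (3*m+6) : ℚ))
        - PowerSeries.C (R := ℚ) 4 * (X * PowerSeries.mk fun j => ((3*m+6 + j).choose (3*m+6) : ℚ)) := by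
    simp only [map_ofNat]; ring
  rw [hexp, map_sub]
  rcases m with _ | k
  · norm_num
  · rw [PowerSeries.coeff_C_mul, PowerSeries.coeff_succ_X_mul, PowerSeries.coeff_mk, PowerSeries.coeff_mk]
    push_cast
    have e1 : 3*(k+1)+6 + (k+1) = 4*k+10 := by ring
    have e2 : 3*(k+1)+6 + k = 4*k+9 := by ring
    have e3 : 4*(k+1+1)+1 = 4*k+9 := by ring
    rw [e1, e2, e3]
    have hsymm1 : (4*k+10).choose (3*(k+1)+6) = (4*k+10).choose (k+1) := by
      rw [show 3*(k+1)+6 = 4*k+10 - (k+1) by omega, Nat.choose_symm (by omega)]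
    have hsymm2 : (4*k+9).choose (3*(k+1)+6) = (4*k+9).choose k := by
      rw [show 3*(k+1)+6 = 4*k+9 - k by omega, Nat.choose_symm (by omega)]
    rw [hsymm1, hsymm2]
    have hpascal : ((4*k+10).choose (k+1) : ℚ)
        = ((4*k+9).choose k : ℚ) + ((4*k+9).choose (k+1) : ℚ) := by
      rw [show 4*k+10 = (4*k+9)+1 from rfl]
      exact_mod_cast congrArg (Nat.cast : ℕ → ℚ) (Nat.choose_succ_succ (4*k+9) k)
    have key := chapoton_choose k
    have hk1 : ((k:ℚ)+1+1) ≠ 0 := by positivity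
    have hk2 : ((k:ℚ)+1+1+1) ≠ 0 := by positivity
    rw [hpascal]
    field_simp
    linear_combination key
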